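/- Stationarity of the Warp-U transition kernel: the Markov transition kernel P consisting of (a) a Metropolis-Hastings step with Gaussian random-walk proposal targeting π, followed by (b) sampling index ψ ~ ϖ(ψ|θ), setting θ* = S_ψ^{-1}(θ − μ_ψ), sampling ψ' ~ ν(ψ'|θ*) ∝ ϖ(ψ'|H_{ψ'}(θ*)) q(H_{ψ'}(θ*)) |det S_{ψ'}|, and setting θ' = S_{ψ'}θ* + μ_{ψ'}, leaves π invariant: ∫ π(θ) P(dθ'|θ) = π(θ'). -/

import Mathlib

open MeasureTheory Matrix Real
open scoped ENNReal

/-- Stationarity of the Warp-U transition kernel: the Markov transition kernel consisting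
of (a) a Metropolis–Hastings step `PMH` targeting `π` (assumed `π`-invariant), followed by
(b) sampling `ψ ~ ϖ(ψ|θ)`, setting `θ* = S_ψ⁻¹(θ − μ_ψ)`, sampling
`ψ' ~ ν(ψ'|θ*) ∝ ϖ(ψ'|H_{ψ'}(θ*)) q(H_{ψ'}(θ*)) |det S_{ψ'}|`, and setting
`θ' = S_{ψ'}θ* + μ_{ψ'}`, leaves `π` invariant.  The claim includes that the pure
warp step (b)–(d), given by the kernel `κ`, preserves `π`. -/
theorem warpU_kernel_stationarity
    (d K : ℕ) (hd : 0 < d) (hK : 0 < K)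
    (w : Fin K → ℝ) (hw : ∀ k, 0 ≤ w k) (hwsum : ∑ k, w k = 1)
    (μv : Fin K → (Fin d → ℝ))
    (S : Fin K → Matrix (Fin d) (Fin d) ℝ) (hS : ∀ k, IsUnit (S k).det)
    (φ : (Fin d → ℝ) → ℝ)
    (hφ : φ = fun x => (2 * π) ^ (-(d : ℝ) / 2) * Real.exp (-(∑ i, x i ^ 2) / 2))
    (φcomp : Fin K → (Fin d → ℝ) → ℝ)
    (hφcomp : φcomp = fun k θ => w k * |((S k)⁻¹).det| * φ ((S k)⁻¹.mulVec (θ - μv k)))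
    (φmix : (Fin d → ℝ) → ℝ) (hφmix : φmix = fun θ => ∑ k, φcomp k θ)
    (hφmixpos : ∀ θ, 0 < φmix θ)
    (ϖ : Fin K → (Fin d → ℝ) → ℝ) (hϖ : ϖ = fun k θ => φcomp k θ / φmix θ)
    (q : (Fin d → ℝ) → ℝ) (hq : ∀ θ, 0 ≤ q θ) (hqm : Measurable q)
    (hqi : Integrable q volume)
    (c : ℝ) (hc : c = ∫ θ, q θ) (hcpos : 0 < c)
    (μπ : Measure (Fin d → ℝ))
    (hμπ : μπ = volume.withDensity fun θ => ENNReal.ofReal (q θ / c))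
    (F H : Fin K → (Fin d → ℝ) → (Fin d → ℝ))
    (hF : F = fun k θ => (S k)⁻¹.mulVec (θ - μv k))
    (hH : H = fun k θs => (S k).mulVec θs + μv k)
    (ν : Fin K → (Fin d → ℝ) → ℝ)
    (hν : ν = fun k θs =>
      (ϖ k (H k θs) * q (H k θs) * |(S k).det|) /
        (∑ j, ϖ j (H j θs) * q (H j θs) * |(S j).det|))
    -- the pure Warp-U move: sample ψ, warp, sample ψ', warp back
    (κ : (Fin d → ℝ) → Measure (Fin d → ℝ))
    (hκ : κ = fun θ => Measure.sum fun ψ : Fin K => Measure.sum fun ψ' : Fin K =>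
      (ENNReal.ofReal (ϖ ψ θ * ν ψ' (F ψ θ))) • Measure.dirac (H ψ' (F ψ θ)))
    -- the Metropolis–Hastings step: a Markov kernel with invariant distribution π
    (PMH : (Fin d → ℝ) → Measure (Fin d → ℝ))
    (hPMHmeas : Measurable PMH)
    (hPMHprob : ∀ θ, IsProbabilityMeasure (PMH θ))
    (hPMHinv : μπ.bind PMH = μπ) :
    μπ.bind κ = μπ ∧ μπ.bind (fun θ => (PMH θ).bind κ) = μπ := by
  classical
  -- basic facts
  have hdet : ∀ k, (S k).det ≠ 0 := fun k => (hS k).ne_zero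
  have habs : ∀ k, 0 < |(S k).det| := fun k => abs_pos.mpr (hdet k)
  have hφpos : ∀ x, 0 < φ x := by intro x; rw [hφ]; positivity
  have hφcnn : ∀ k θ, 0 ≤ φcomp k θ := by
    intro k θ; rw [hφcomp]
    exact mul_nonneg (mul_nonneg (hw k) (abs_nonneg _)) (hφpos _).le
  have hϖnn : ∀ k θ, 0 ≤ ϖ k θ := by
    intro k θ; rw [hϖ]; exact div_nonneg (hφcnn k θ) (hφmixpos θ).le
  have hϖsum : ∀ θ, ∑ k, ϖ k θ = 1 := by
    intro θ
    have h1 : ∑ k, ϖ k θ = φmix θ / φmix θ := by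
      simp only [hϖ, ← Finset.sum_div]
      congr 1
      rw [hφmix]
    rw [h1, div_self (hφmixpos θ).ne']
  -- "numerator" of ν
  set Nm : Fin K → (Fin d → ℝ) → ℝ :=
    fun k t => ϖ k (H k t) * q (H k t) * |(S k).det| with hNm
  have hNmnn : ∀ k t, 0 ≤ Nm k t :=
    fun k t => mul_nonneg (mul_nonneg (hϖnn _ _) (hq _)) (abs_nonneg _)
  have hνnn : ∀ k t, 0 ≤ ν k t := by
    intro k t; rw [hν]
    exact div_nonneg (hNmnn k t) (Finset.sum_nonneg fun j _ => hNmnn j t)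
  -- the key pointwise identity:  (∑ ψ, Nm ψ t) * ν ψ' t = Nm ψ' t
  have hkey : ∀ (ψ' : Fin K) t, (∑ j, Nm j t) * ν ψ' t = Nm ψ' t := by
    intro ψ' t
    rw [hν]
    by_cases hZ : (∑ j, Nm j t) = 0
    · have : Nm ψ' t = 0 :=
        (Finset.sum_eq_zero_iff_of_nonneg (fun j _ => hNmnn j t)).mp hZ ψ' (Finset.mem_univ _)
      simp [hZ, this]
    · exact mul_div_cancel₀ _ hZ
  -- continuity / measurability
  have hφcont : Continuous φ := by
    rw [hφ]
    exact continuous_const.mul (Real.continuous_exp.comp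
      ((continuous_finset_sum _ fun i _ => (continuous_apply i).pow 2).neg.div_const 2))
  have hmulVec : ∀ (M : Matrix (Fin d) (Fin d) ℝ), Continuous fun v : Fin d → ℝ => M.mulVec v := by
    intro M
    have := LinearMap.continuous_on_pi (Matrix.toLin' M)
    exact this
  have hFcont : ∀ k, Continuous (F k) := by
    intro k; rw [hF]
    exact (hmulVec _).comp (continuous_id.sub continuous_const)
  have hHcont : ∀ k, Continuous (H k) := by
    intro k; rw [hH]
    exact ((hmulVec _).comp continuous_id).add continuous_const
  have hFm : ∀ k, Measurable (F k) := fun k => (hFcont k).measurable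
  have hHm : ∀ k, Measurable (H k) := fun k => (hHcont k).measurable
  have hϖm : ∀ k, Measurable (ϖ k) := by
    intro k; rw [hϖ, hφcomp, hφmix]
    refine Measurable.div ?_ ?_
    · exact (continuous_const.mul (hφcont.comp ((hmulVec _).comp
        (continuous_id.sub continuous_const)))).measurable
    · rw [hφcomp]
      exact (continuous_finset_sum _ fun i _ => continuous_const.mul (hφcont.comp ((hmulVec _).comp
        (continuous_id.sub continuous_const)))).measurable
  have hNmm : ∀ k, Measurable (Nm k) := by
    intro k
    exact (((hϖm k).comp (hHm k)).mul (hqm.comp (hHm k))).mul measurable_const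
  have hνm : ∀ k, Measurable (ν k) := by
    intro k; rw [hν]
    exact Measurable.div (hNmm k) (Finset.measurable_sum _ fun j _ => hNmm j)
  -- H ∘ F = id
  have hHF : ∀ k θ, H k (F k θ) = θ := by
    intro k θ
    rw [hH, hF]
    simp only [Matrix.mulVec_mulVec, Matrix.mul_nonsing_inv _ (hS k), Matrix.one_mulVec]
    abel
  -- pushforward of volume under F and H
  have hmapF : ∀ k, volume.map (F k) = ENNReal.ofReal |(S k).det| • volume := by
    intro k
    have hdi : ((S k)⁻¹).det = ((S k).det)⁻¹ := by
      rw [Matrix.det_nonsing_inv, Ring.inverse_eq_inv']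
    have hcont : Continuous fun v : Fin d → ℝ => Matrix.toLin' (S k)⁻¹ v :=
      LinearMap.continuous_on_pi _
    have h1 : F k = (fun v => Matrix.toLin' (S k)⁻¹ v) ∘ (fun θ => θ + (-μv k)) := by
      funext θ; rw [hF]; simp [Matrix.toLin'_apply, sub_eq_add_neg]
    rw [h1, ← Measure.map_map hcont.measurable (measurable_add_const _),
      map_add_right_eq_self volume (-μv k),
      Real.map_matrix_volume_pi_eq_smul_volume_pi (by simp [hdi, hdet k]),
      hdi, inv_inv]
  have hmapH : ∀ k, volume.map (H k) = ENNReal.ofReal |(S k).det|⁻¹ • volume := by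
    intro k
    have hcont : Continuous fun v : Fin d → ℝ => Matrix.toLin' (S k) v :=
      LinearMap.continuous_on_pi _
    have h1 : H k = (fun v => v + μv k) ∘ (fun θ => Matrix.toLin' (S k) θ) := by
      funext θ; rw [hH]; simp [Matrix.toLin'_apply]
    rw [h1, ← Measure.map_map (measurable_add_const _) hcont.measurable,
      Real.map_matrix_volume_pi_eq_smul_volume_pi (hdet k),
      Measure.map_smul, map_add_right_eq_self volume (μv k), abs_inv]
  -- change of variables
  have hCoVF : ∀ k (g : (Fin d → ℝ) → ℝ≥0∞), Measurable g →
      (∫⁻ θ, g (F k θ)) = ENNReal.ofReal |(S k).det| * ∫⁻ t, g t := by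
    intro k g hg
    rw [← lintegral_map hg (hFm k), hmapF k, lintegral_smul_measure, smul_eq_mul]
  have hCoVH : ∀ k (g : (Fin d → ℝ) → ℝ≥0∞), Measurable g →
      (∫⁻ t, g (H k t)) = ENNReal.ofReal |(S k).det|⁻¹ * ∫⁻ θ, g θ := by
    intro k g hg
    rw [← lintegral_map hg (hHm k), hmapH k, lintegral_smul_measure, smul_eq_mul]
  -- measurability of κ
  have hκm : Measurable κ := by
    rw [hκ]
    apply Measure.measurable_of_measurable_coe
    intro s hs
    simp only [Measure.sum_apply _ hs, Measure.smul_apply, Measure.dirac_apply' _ hs,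
      smul_eq_mul]
    refine Measurable.ennreal_tsum fun ψ => Measurable.ennreal_tsum fun ψ' => ?_
    refine Measurable.mul ?_ ?_
    · exact ((hϖm ψ).mul ((hνm ψ').comp (hFm ψ))).ennreal_ofReal
    · exact (measurable_const.indicator hs).comp ((hHm ψ').comp (hFm ψ))
  -- the main statement: the warp move preserves π
  have hbind : μπ.bind κ = μπ := by
    ext s hs
    rw [Measure.bind_apply hs hκm.aemeasurable]
    set ind : (Fin d → ℝ) → ℝ≥0∞ := s.indicator 1 with hind
    have hindm : Measurable ind := measurable_const.indicator hs
    have hκs : ∀ θ, κ θ s =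
        ∑ ψ, ∑ ψ', ENNReal.ofReal (ϖ ψ θ * ν ψ' (F ψ θ)) * ind (H ψ' (F ψ θ)) := by
      intro θ
      rw [hκ]
      simp only [Measure.sum_apply _ hs, tsum_fintype, Measure.smul_apply,
        Measure.dirac_apply' _ hs, smul_eq_mul, hind]
    -- integrand measurabilities
    have hT1m : ∀ (ψ ψ' : Fin K), Measurable fun θ =>
        ENNReal.ofReal (q θ / c * (ϖ ψ θ * ν ψ' (F ψ θ))) * ind (H ψ' (F ψ θ)) := by
      intro ψ ψ'
      exact ((hqm.div_const c).mul ((hϖm ψ).mul ((hνm ψ').comp (hFm ψ)))).ennreal_ofReal.mul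
        (hindm.comp ((hHm ψ').comp (hFm ψ)))
    have hGm : ∀ (ψ ψ' : Fin K), Measurable fun t =>
        ENNReal.ofReal (q (H ψ t) / c * (ϖ ψ (H ψ t) * ν ψ' t)) * ind (H ψ' t) := by
      intro ψ ψ'
      exact (((hqm.comp (hHm ψ)).div_const c).mul
        (((hϖm ψ).comp (hHm ψ)).mul (hνm ψ'))).ennreal_ofReal.mul (hindm.comp (hHm ψ'))
    have hT2m : ∀ (ψ ψ' : Fin K), Measurable fun t =>
        ENNReal.ofReal (Nm ψ t * ν ψ' t / c) * ind (H ψ' t) := by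
      intro ψ ψ'
      exact (((hNmm ψ).mul (hνm ψ')).div_const c).ennreal_ofReal.mul (hindm.comp (hHm ψ'))
    have hWm : ∀ (ψ' : Fin K), Measurable fun θ =>
        ENNReal.ofReal (ϖ ψ' θ * q θ / c) * ind θ := by
      intro ψ'
      exact (((hϖm ψ').mul hqm).div_const c).ennreal_ofReal.mul hindm
    -- step 0: unfold the withDensity integral
    have step0 : ∫⁻ θ, κ θ s ∂μπ =
        ∑ ψ, ∑ ψ', ∫⁻ θ, ENNReal.ofReal (q θ / c * (ϖ ψ θ * ν ψ' (F ψ θ))) *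
          ind (H ψ' (F ψ θ)) := by
      have hg : Measurable fun θ => κ θ s := (Measure.measurable_coe hs).comp hκm
      rw [hμπ, lintegral_withDensity_eq_lintegral_mul _ (hqm.div_const c).ennreal_ofReal hg]
      simp only [Pi.mul_apply]
      have : ∀ θ, ENNReal.ofReal (q θ / c) * κ θ s =
          ∑ ψ, ∑ ψ', ENNReal.ofReal (q θ / c * (ϖ ψ θ * ν ψ' (F ψ θ))) *
            ind (H ψ' (F ψ θ)) := by
        intro θ
        rw [hκs θ, Finset.mul_sum]
        refine Finset.sum_congr rfl fun ψ _ => ?_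
        rw [Finset.mul_sum]
        refine Finset.sum_congr rfl fun ψ' _ => ?_
        rw [← mul_assoc, ← ENNReal.ofReal_mul (div_nonneg (hq θ) hcpos.le)]
      rw [lintegral_congr this, lintegral_finset_sum _ fun ψ _ =>
        Finset.measurable_sum _ fun ψ' _ => hT1m ψ ψ']
      exact Finset.sum_congr rfl fun ψ _ => lintegral_finset_sum _ fun ψ' _ => hT1m ψ ψ'
    -- step 1: change of variables θ = H ψ t in each term
    have step1 : ∀ (ψ ψ' : Fin K),
        (∫⁻ θ, ENNReal.ofReal (q θ / c * (ϖ ψ θ * ν ψ' (F ψ θ))) * ind (H ψ' (F ψ θ)))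
          = ∫⁻ t, ENNReal.ofReal (Nm ψ t * ν ψ' t / c) * ind (H ψ' t) := by
      intro ψ ψ'
      have h1 : (∫⁻ θ, ENNReal.ofReal (q θ / c * (ϖ ψ θ * ν ψ' (F ψ θ))) * ind (H ψ' (F ψ θ)))
          = ∫⁻ θ, (fun t => ENNReal.ofReal (q (H ψ t) / c * (ϖ ψ (H ψ t) * ν ψ' t)) *
              ind (H ψ' t)) (F ψ θ) := by
        refine lintegral_congr fun θ => ?_
        simp only [hHF ψ θ]
      rw [h1, hCoVF ψ _ (hGm ψ ψ'), ← lintegral_const_mul' _ _ ENNReal.ofReal_ne_top]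
      refine lintegral_congr fun t => ?_
      rw [← mul_assoc, ← ENNReal.ofReal_mul (abs_nonneg _)]
      congr 1
      rw [hNm]
      ring
    -- step 2: sum over ψ
    have step2 : ∀ ψ' : Fin K,
        (∑ ψ, ∫⁻ t, ENNReal.ofReal (Nm ψ t * ν ψ' t / c) * ind (H ψ' t))
          = ∫⁻ t, ENNReal.ofReal (Nm ψ' t / c) * ind (H ψ' t) := by
      intro ψ'
      rw [← lintegral_finset_sum _ fun ψ _ => hT2m ψ ψ']
      refine lintegral_congr fun t => ?_
      rw [← Finset.sum_mul, ← ENNReal.ofReal_sum_of_nonneg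
        (fun ψ _ => div_nonneg (mul_nonneg (hNmnn ψ t) (hνnn ψ' t)) hcpos.le)]
      congr 2
      rw [← Finset.sum_div, ← Finset.sum_mul, hkey ψ' t]
    -- step 3: change of variables back, t = F ψ' θ
    have step3 : ∀ ψ' : Fin K,
        (∫⁻ t, ENNReal.ofReal (Nm ψ' t / c) * ind (H ψ' t))
          = ∫⁻ θ, ENNReal.ofReal (ϖ ψ' θ * q θ / c) * ind θ := by
      intro ψ'
      have h1 : (∫⁻ t, ENNReal.ofReal (Nm ψ' t / c) * ind (H ψ' t))
          = ∫⁻ t, ENNReal.ofReal |(S ψ').det| *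
              ((fun θ => ENNReal.ofReal (ϖ ψ' θ * q θ / c) * ind θ) (H ψ' t)) := by
        refine lintegral_congr fun t => ?_
        simp only [hNm]
        rw [← mul_assoc, ← ENNReal.ofReal_mul (abs_nonneg _)]
        congr 1
        ring
      rw [h1, lintegral_const_mul' _ _ ENNReal.ofReal_ne_top, hCoVH ψ' _ (hWm ψ'),
        ← mul_assoc, ← ENNReal.ofReal_mul (abs_nonneg _),
        mul_inv_cancel₀ (habs ψ').ne', ENNReal.ofReal_one, one_mul]
    -- step 4: sum over ψ'
    have step4 : (∑ ψ' : Fin K, ∫⁻ θ, ENNReal.ofReal (ϖ ψ' θ * q θ / c) * ind θ) = μπ s := by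
      rw [← lintegral_finset_sum _ fun ψ' _ => hWm ψ']
      have : ∀ θ, (∑ ψ' : Fin K, ENNReal.ofReal (ϖ ψ' θ * q θ / c) * ind θ)
          = ENNReal.ofReal (q θ / c) * ind θ := by
        intro θ
        rw [← Finset.sum_mul, ← ENNReal.ofReal_sum_of_nonneg
          (fun ψ' _ => div_nonneg (mul_nonneg (hϖnn ψ' θ) (hq θ)) hcpos.le)]
        congr 2
        rw [← Finset.sum_div, ← Finset.sum_mul, hϖsum θ, one_mul]
      rw [lintegral_congr this, hμπ, withDensity_apply _ hs]
      have h2 : ∀ θ, ENNReal.ofReal (q θ / c) * ind θ =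
          s.indicator (fun θ => ENNReal.ofReal (q θ / c)) θ := by
        intro θ
        by_cases hθ : θ ∈ s <;> simp [hind, Set.indicator_apply, hθ]
      rw [lintegral_congr h2, lintegral_indicator hs]
    calc ∫⁻ θ, κ θ s ∂μπ
        = ∑ ψ, ∑ ψ', ∫⁻ θ, ENNReal.ofReal (q θ / c * (ϖ ψ θ * ν ψ' (F ψ θ))) *
            ind (H ψ' (F ψ θ)) := step0
      _ = ∑ ψ, ∑ ψ', ∫⁻ t, ENNReal.ofReal (Nm ψ t * ν ψ' t / c) * ind (H ψ' t) := by
            exact Finset.sum_congr rfl fun ψ _ => Finset.sum_congr rfl fun ψ' _ => step1 ψ ψ'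
      _ = ∑ ψ', ∑ ψ, ∫⁻ t, ENNReal.ofReal (Nm ψ t * ν ψ' t / c) * ind (H ψ' t) :=
            Finset.sum_comm
      _ = ∑ ψ' : Fin K, ∫⁻ t, ENNReal.ofReal (Nm ψ' t / c) * ind (H ψ' t) :=
            Finset.sum_congr rfl fun ψ' _ => step2 ψ'
      _ = ∑ ψ' : Fin K, ∫⁻ θ, ENNReal.ofReal (ϖ ψ' θ * q θ / c) * ind θ :=
            Finset.sum_congr rfl fun ψ' _ => step3 ψ'
      _ = μπ s := step4
  refine ⟨hbind, ?_⟩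
  rw [← Measure.bind_bind hPMHmeas.aemeasurable hκm.aemeasurable, hPMHinv, hbind]
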